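/- Double robustness, model for nonresponse correct: Let π_r(L) = P(R=r|L) be the true nonresponse probabilities with π_1(L) > 0 a.s., and let m_r(L_{(r)}) be arbitrary (possibly misspecified) functions. Then E[ 1(R=1)U(L)/π_1(L) − (1(R=1)/π_1(L))·Σ_{r≠1} π_r(L)·m_r(L_{(r)}) + Σ_{r≠1} 1(R=r)·m_r(L_{(r)}) ] = E[U(L)]. -/

import Mathlib

open Finset MeasureTheory

open Classical in
noncomputable def pr {Ω : Type*} [Fintype Ω] (P : Ω → ℝ) (E : Ω → Prop) : ℝ :=
  ∑ ω, if E ω then P ω else 0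

noncomputable def cpr {Ω : Type*} [Fintype Ω] (P : Ω → ℝ) (E F : Ω → Prop) : ℝ :=
  pr P (fun ω => E ω ∧ F ω) / pr P F

noncomputable def ex {Ω : Type*} [Fintype Ω] (P : Ω → ℝ) (U : Ω → ℝ) : ℝ :=
  ∑ ω, P ω * U ω

open Classical in
noncomputable def cex {Ω : Type*} [Fintype Ω] (P : Ω → ℝ) (U : Ω → ℝ) (F : Ω → Prop) : ℝ :=
  (∑ ω, if F ω then P ω * U ω else 0) / pr P F

lemma pr_nonneg {Ω : Type*} [Fintype Ω] (P : Ω → ℝ) (hP : ∀ ω, 0 ≤ P ω) (E : Ω → Prop) :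
    0 ≤ pr P E := by
  classical
  unfold pr
  refine Finset.sum_nonneg fun ω _ => ?_
  split
  · exact hP ω
  · exact le_rfl

lemma key {Ω A : Type*} [Fintype Ω] (P : Ω → ℝ) (hP : ∀ ω, 0 ≤ P ω)
    (L : Ω → A) (E : Ω → Prop) [DecidablePred E] (q g : A → ℝ)
    (hq : ∀ l, 0 < pr P (fun ω => L ω = l) → q l = cpr P E (fun ω => L ω = l)) :
    ∑ ω, (if E ω then P ω else 0) * g (L ω) = ∑ ω, P ω * q (L ω) * g (L ω) := by
  classical
  rw [← sub_eq_zero, ← Finset.sum_sub_distrib]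
  have hmap : ∀ ω ∈ (Finset.univ : Finset Ω), L ω ∈ Finset.univ.image L :=
    fun ω _ => Finset.mem_image_of_mem L (Finset.mem_univ ω)
  rw [← Finset.sum_fiberwise_of_maps_to hmap
    (fun ω => (if E ω then P ω else 0) * g (L ω) - P ω * q (L ω) * g (L ω))]
  apply Finset.sum_eq_zero
  intro l _
  have hfib : ∀ ω ∈ Finset.univ.filter (fun ω => L ω = l),
      (if E ω then P ω else 0) * g (L ω) - P ω * q (L ω) * g (L ω)
        = ((if E ω then P ω else 0) - P ω * q l) * g l := by
    intro ω hω
    have : L ω = l := (Finset.mem_filter.mp hω).2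
    rw [this]; ring
  rw [Finset.sum_congr rfl hfib]
  have hprL : pr P (fun ω => L ω = l)
      = ∑ ω ∈ Finset.univ.filter (fun ω => L ω = l), P ω := by
    unfold pr; rw [Finset.sum_filter]
  have hprEL : pr P (fun ω => E ω ∧ L ω = l)
      = ∑ ω ∈ Finset.univ.filter (fun ω => L ω = l), (if E ω then P ω else 0) := by
    unfold pr
    rw [Finset.sum_filter]
    apply Finset.sum_congr rfl
    intro ω _
    by_cases h1 : L ω = l <;> by_cases h2 : E ω <;> simp [h1, h2]
  rcases lt_or_eq_of_le (pr_nonneg P hP (fun ω => L ω = l)) with hpos | hzero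
  · have hql := hq l hpos
    have h2 : ∑ x ∈ Finset.univ.filter (fun ω => L ω = l), P x * q l
        = (pr P fun ω => L ω = l) * q l := by
      rw [hprL, Finset.sum_mul]
    rw [← Finset.sum_mul, Finset.sum_sub_distrib, ← hprEL, h2, hql]
    unfold cpr
    field_simp
    ring
  · apply Finset.sum_eq_zero
    intro ω hω
    have hP0 : P ω = 0 := by
      have := (Finset.sum_eq_zero_iff_of_nonneg
        (fun x _ => hP x)).mp (by rw [← hprL, ← hzero]) ω hω
      exact this
    simp [hP0]

theorem stmt9 {Ω A : Type*} [Fintype Ω] {J : ℕ} {B : Fin (J + 1) → Type*}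
    (P : Ω → ℝ) (hP : ∀ ω, 0 ≤ P ω) (hPsum : ∑ ω, P ω = 1)
    (R : Ω → Fin (J + 1)) (L : Ω → A)
    (O : (r : Fin (J + 1)) → A → B r) (U : A → ℝ)
    (π : Fin (J + 1) → A → ℝ)
    (hπ : ∀ (r : Fin (J + 1)) (l : A), 0 < pr P (fun ω => L ω = l) →
      π r l = cpr P (fun ω => R ω = r) (fun ω => L ω = l))
    (hpos : ∀ l : A, 0 < pr P (fun ω => L ω = l) → 0 < π 0 l)
    (m : (r : Fin (J + 1)) → B r → ℝ) :
    ex P (fun ω =>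
        (if R ω = 0 then
          (U (L ω) -
            ∑ r ∈ Finset.univ.erase (0 : Fin (J + 1)),
              π r (L ω) * m r (O r (L ω))) / π 0 (L ω)
        else 0) +
        ∑ r ∈ Finset.univ.erase (0 : Fin (J + 1)),
          (if R ω = r then m r (O r (L ω)) else 0)) =
      ex P (fun ω => U (L ω)) := by
  classical
  have hmass : ∀ ω : Ω, P ω ≠ 0 → 0 < pr P (fun x => L x = L ω) := by
    intro ω hω
    have h1 : 0 < P ω := (hP ω).lt_of_ne (Ne.symm hω)
    have h2 : P ω ≤ pr P (fun x => L x = L ω) := by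
      unfold pr
      have hnn : ∀ x ∈ (Finset.univ : Finset Ω),
          (0:ℝ) ≤ if L x = L ω then P x else 0 := by
        intro x _
        split
        · exact hP x
        · exact le_rfl
      have := Finset.single_le_sum hnn (Finset.mem_univ ω)
      simpa using this
    linarith
  set S : A → ℝ := fun l =>
    ∑ r ∈ Finset.univ.erase (0 : Fin (J + 1)), π r l * m r (O r l) with hS
  show ∑ ω, P ω * ((if R ω = 0 then (U (L ω) - S (L ω)) / π 0 (L ω) else 0)
      + ∑ r ∈ Finset.univ.erase (0 : Fin (J + 1)),
          (if R ω = r then m r (O r (L ω)) else 0))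
    = ∑ ω, P ω * U (L ω)
  have term1 : ∑ ω, P ω * (if R ω = 0 then (U (L ω) - S (L ω)) / π 0 (L ω) else 0)
      = ∑ ω, P ω * (U (L ω) - S (L ω)) := by
    have e1 : ∀ ω : Ω, P ω * (if R ω = 0 then (U (L ω) - S (L ω)) / π 0 (L ω) else 0)
        = (if R ω = 0 then P ω else 0) * ((U (L ω) - S (L ω)) / π 0 (L ω)) := by
      intro ω; split <;> ring
    rw [Finset.sum_congr rfl (fun ω _ => e1 ω),
      key P hP L (fun ω => R ω = 0) (π 0) (fun l => (U l - S l) / π 0 l) (fun l => hπ 0 l)]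
    apply Finset.sum_congr rfl
    intro ω _
    by_cases hω : P ω = 0
    · simp [hω]
    · have hp : π 0 (L ω) ≠ 0 := ne_of_gt (hpos _ (hmass ω hω))
      field_simp
  have term2 : ∑ ω, P ω * (∑ r ∈ Finset.univ.erase (0 : Fin (J + 1)),
        (if R ω = r then m r (O r (L ω)) else 0))
      = ∑ ω, P ω * S (L ω) := by
    have e : ∀ ω : Ω, P ω * (∑ r ∈ Finset.univ.erase (0 : Fin (J + 1)),
          (if R ω = r then m r (O r (L ω)) else 0))
        = ∑ r ∈ Finset.univ.erase (0 : Fin (J + 1)),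
          (if R ω = r then P ω else 0) * m r (O r (L ω)) := by
      intro ω
      rw [Finset.mul_sum]
      refine Finset.sum_congr rfl fun r _ => ?_
      split <;> ring
    rw [Finset.sum_congr rfl (fun ω _ => e ω), Finset.sum_comm]
    have e2 : ∀ r ∈ Finset.univ.erase (0 : Fin (J + 1)),
        (∑ ω, (if R ω = r then P ω else 0) * m r (O r (L ω)))
        = ∑ ω, P ω * π r (L ω) * m r (O r (L ω)) :=
      fun r _ => key P hP L (fun ω => R ω = r) (π r) (fun l => m r (O r l)) (fun l => hπ r l)
    rw [Finset.sum_congr rfl e2, Finset.sum_comm]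
    refine Finset.sum_congr rfl fun ω _ => ?_
    simp only [hS, Finset.mul_sum]
    refine Finset.sum_congr rfl fun r _ => ?_
    ring
  have split : (∑ ω, P ω * ((if R ω = 0 then (U (L ω) - S (L ω)) / π 0 (L ω) else 0)
      + ∑ r ∈ Finset.univ.erase (0 : Fin (J + 1)),
          (if R ω = r then m r (O r (L ω)) else 0)))
      = (∑ ω, P ω * (if R ω = 0 then (U (L ω) - S (L ω)) / π 0 (L ω) else 0))
        + ∑ ω, P ω * (∑ r ∈ Finset.univ.erase (0 : Fin (J + 1)),
            (if R ω = r then m r (O r (L ω)) else 0)) := by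
    rw [← Finset.sum_add_distrib]
    exact Finset.sum_congr rfl fun ω _ => by ring
  rw [split, term1, term2, ← Finset.sum_add_distrib]
  exact Finset.sum_congr rfl fun ω _ => by ring
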